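/- Let T, T_1, T_2 be trees such that T = T_1 ∪ {e} ∪ T_2, where T_1 and T_2 are vertex-disjoint caterpillar trees and e is an edge (a bridge) joining a vertex of the central path of T_1 to a vertex of the central path of T_2. Then T admits a bijective labeling of its vertices by {1,…,n} (n = |V(T)|) such that d(i, i+1) ≤ 2 for all 1 ≤ i < n; hence every admissible path of T with respect to this labeling has at most 3 vertices. -/

import Mathlib

/-- A list of vertices forms a path in `G`: consecutive vertices are adjacent
and all vertices are distinct. -/
def IsPathList {V : Type*} (G : SimpleGraph V) (l : List V) : Prop :=
  l.Chain' G.Adj ∧ l.Nodup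

/-- A list of vertices is an *admissible path* in a graph `G` on `{1,…,n}`
(modeled as `Fin n`): it is a path from `i` to `j` with `i < j`, every
interior vertex is `< i` or `> j`, and no proper (ordered) subset of the
interior vertices together with `i` and `j` forms a path in `G`. -/
def IsAdmissible {n : ℕ} (G : SimpleGraph (Fin n)) (l : List (Fin n)) : Prop :=
  ∃ i j : Fin n, i < j ∧ l.head? = some i ∧ l.getLast? = some j ∧
    IsPathList G l ∧
    (∀ v ∈ l.tail.dropLast, v < i ∨ j < v) ∧
    (∀ l' : List (Fin n), l'.Sublist l.tail.dropLast → l' ≠ l.tail.dropLast →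
      ¬ IsPathList G (i :: (l' ++ [j])))

open SimpleGraph List Sum

namespace BrCat

variable {V : Type*} {G : SimpleGraph V}

/-- There is a walk of length at most 2 between the two vertices. -/
def R2 (G : SimpleGraph V) (x y : V) : Prop := ∃ w : G.Walk x y, w.length ≤ 2

/-- Closed neighborhood membership. -/
def Nbr (G : SimpleGraph V) (s y : V) : Prop := y = s ∨ G.Adj s y

lemma Nbr.self (s : V) : Nbr G s s := Or.inl rfl

lemma nbr_exists_walk {s x : V} (h : Nbr G s x) : ∃ w : G.Walk s x, w.length ≤ 1 := by
  rcases h with rfl | h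
  · exact ⟨SimpleGraph.Walk.nil, by simp⟩
  · exact ⟨SimpleGraph.Walk.cons h SimpleGraph.Walk.nil, by simp⟩

lemma R2.of_adj {x y : V} (h : G.Adj x y) : R2 G x y :=
  ⟨SimpleGraph.Walk.cons h SimpleGraph.Walk.nil, by simp⟩

lemma R2.symm {x y : V} (h : R2 G x y) : R2 G y x := by
  obtain ⟨w, hw⟩ := h
  exact ⟨w.reverse, by simpa using hw⟩

lemma rnn {s x y : V} (hx : Nbr G s x) (hy : Nbr G s y) : R2 G x y := by
  obtain ⟨wx, hwx⟩ := nbr_exists_walk hx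
  obtain ⟨wy, hwy⟩ := nbr_exists_walk hy
  exact ⟨wx.reverse.append wy, by simp [SimpleGraph.Walk.length_append]; omega⟩

lemma r2_of_nbr_adj {s x t : V} (hx : Nbr G s x) (h : G.Adj s t) : R2 G x t := by
  obtain ⟨wx, hwx⟩ := nbr_exists_walk hx
  exact ⟨wx.reverse.append (SimpleGraph.Walk.cons h SimpleGraph.Walk.nil),
    by simp [SimpleGraph.Walk.length_append]; omega⟩

lemma chain'_of_forall_nbr {s : V} : ∀ {m : List V}, (∀ x ∈ m, Nbr G s x) →
    List.Chain' (R2 G) m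
  | [], _ => List.isChain_nil
  | [_], _ => List.isChain_singleton _
  | a :: b :: m, h => by
    rw [List.Chain', List.isChain_cons_cons]
    exact ⟨rnn (h a (by simp)) (h b (by simp)),
      chain'_of_forall_nbr (fun x hx => h x (List.mem_cons_of_mem _ hx))⟩

mutual
  /-- Outward pass of the zig-zag traversal. -/
  def zigA : List (V × List V) → List V
    | [] => []
    | p :: rest => p.1 :: zigB rest
  /-- Return pass of the zig-zag traversal. -/
  def zigB : List (V × List V) → List V
    | [] => []
    | p :: rest => p.2 ++ zigA rest
end

/-- The zig-zag traversal of a caterpillar arm. -/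
def zig (arm : List (V × List V)) : List V := zigA arm ++ (zigB arm).reverse

lemma zigAB_perm : ∀ arm : List (V × List V),
    (zigA arm ++ zigB arm).Perm (arm.flatMap fun p => p.1 :: p.2)
  | [] => by simp [zigA, zigB]
  | p :: rest => by
    rw [zigA, zigB, List.flatMap_cons, List.cons_append]
    refine List.Perm.cons _ ?_
    calc zigB rest ++ (p.2 ++ zigA rest)
        ~ (p.2 ++ zigA rest) ++ zigB rest := List.perm_append_comm
      _ = p.2 ++ (zigA rest ++ zigB rest) := by rw [List.append_assoc]
      _ ~ p.2 ++ rest.flatMap (fun p => p.1 :: p.2) :=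
          List.Perm.append_left _ (zigAB_perm rest)

lemma zig_perm (arm : List (V × List V)) :
    (zig arm).Perm (arm.flatMap fun p => p.1 :: p.2) :=
  (List.Perm.append_left _ (List.reverse_perm _)).trans (zigAB_perm arm)

lemma mem_head?_append {l l' : List V} {y : V} (h : y ∈ (l ++ l').head?) :
    y ∈ l.head? ∨ y ∈ l'.head? := by
  cases l with
  | nil => exact Or.inr (by simpa using h)
  | cons a l => exact Or.inl (by simpa using h)

lemma mem_getLast?_append {l l' : List V} {y : V} (h : y ∈ (l ++ l').getLast?) :
    y ∈ l'.getLast? ∨ y ∈ l.getLast? := by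
  cases l' with
  | nil => exact Or.inr (by simpa using h)
  | cons a l' =>
      rw [List.getLast?_append_of_ne_nil _ (by simp)] at h
      exact Or.inl h

lemma mem_getLast?_cons' {a x : V} {l : List V} (h : x ∈ (a :: l).getLast?) :
    x ∈ l.getLast? ∨ x = a := by
  cases l with
  | nil => exact Or.inr (Eq.symm (by simpa using h))
  | cons b l => rw [List.getLast?_cons_cons] at h; exact Or.inl h

lemma zigAB_chain : ∀ (arm : List (V × List V)) (s : V),
    List.Chain G.Adj s (arm.map Prod.fst) →
    (∀ p ∈ arm, ∀ x ∈ p.2, G.Adj p.1 x) →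
    (∀ l' : List V, List.Chain' (R2 G) l' → (∀ y ∈ l'.head?, y = s) →
       List.Chain' (R2 G) ((zigA arm ++ (zigB arm).reverse) ++ l') ∧
       ∀ y ∈ ((zigA arm ++ (zigB arm).reverse) ++ l').head?, Nbr G s y)
    ∧
    (∀ l' : List V, List.Chain' (R2 G) l' → (∀ y ∈ l'.head?, Nbr G s y) →
       List.Chain' (R2 G) ((zigB arm ++ (zigA arm).reverse) ++ l') ∧
       ∀ y ∈ ((zigB arm ++ (zigA arm).reverse) ++ l').head?, R2 G s y)
  | [], s, _, _ => by
    constructor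
    · intro l' hl' hhead
      refine ⟨by simpa [zigA, zigB] using hl', ?_⟩
      intro y hy
      simp only [zigA, zigB, List.reverse_nil, List.append_nil, List.nil_append] at hy
      exact Or.inl (hhead y hy)
    · intro l' hl' hhead
      refine ⟨by simpa [zigA, zigB] using hl', ?_⟩
      intro y hy
      simp only [zigA, zigB, List.reverse_nil, List.append_nil, List.nil_append] at hy
      exact rnn (Or.inl rfl) (hhead y hy)
  | p :: rest, s, hchain, hleaf => by
    rw [List.map_cons, List.Chain, List.isChain_cons_cons] at hchain
    obtain ⟨hsp, hchainrest⟩ := hchain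
    have hleafp : ∀ x ∈ p.2, G.Adj p.1 x := hleaf p (by simp)
    have hleafrest : ∀ q ∈ rest, ∀ x ∈ q.2, G.Adj q.1 x :=
      fun q hq => hleaf q (List.mem_cons_of_mem _ hq)
    have IH := zigAB_chain rest p.1 hchainrest hleafrest
    constructor
    · -- outward-pass form
      intro l' hl' hhead
      have hkey : ((zigA (p :: rest) ++ (zigB (p :: rest)).reverse) ++ l')
          = p.1 :: ((zigB rest ++ (zigA rest).reverse) ++ (p.2.reverse ++ l')) := by
        simp [zigA, zigB, List.append_assoc]
      have hcont : List.Chain' (R2 G) (p.2.reverse ++ l') := by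
        refine List.IsChain.append ?_ hl' ?_
        · exact chain'_of_forall_nbr (fun x hx =>
            Or.inr (hleafp x (by simpa using hx)))
        · intro x hx y hy
          have hx' : x ∈ p.2 := by
            have := List.mem_of_mem_getLast? hx
            simpa using this
          have hy' : y = s := hhead y hy
          subst hy'
          exact rnn (Or.inr (hleafp x hx')) (Or.inr hsp.symm)
      have hconthead : ∀ y ∈ (p.2.reverse ++ l').head?, Nbr G p.1 y := by
        intro y hy
        rcases mem_head?_append hy with hy | hy
        · exact Or.inr (hleafp y (by simpa using List.mem_of_mem_head? hy))
        · have := hhead y hy; subst this; exact Or.inr hsp.symm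
      obtain ⟨hch, hhd⟩ := IH.2 (p.2.reverse ++ l') hcont hconthead
      constructor
      · rw [hkey, List.Chain', List.isChain_cons]
        refine ⟨?_, hch⟩
        intro y hy
        exact hhd y hy
      · intro y hy
        rw [hkey] at hy
        simp only [List.head?_cons, Option.mem_some_iff] at hy
        subst hy
        exact Or.inr hsp
    · -- return-pass form
      intro l' hl' hhead
      have hkey : ((zigB (p :: rest) ++ (zigA (p :: rest)).reverse) ++ l')
          = p.2 ++ ((zigA rest ++ (zigB rest).reverse) ++ (p.1 :: l')) := by
        simp [zigA, zigB, List.append_assoc]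
      have hcont : List.Chain' (R2 G) (p.1 :: l') := by
        rw [List.Chain', List.isChain_cons]
        refine ⟨?_, hl'⟩
        intro y hy
        exact rnn (Or.inr hsp) (hhead y hy)
      have hconthead : ∀ y ∈ (p.1 :: l').head?, y = p.1 := by simp
      obtain ⟨hch, hhd⟩ := IH.1 (p.1 :: l') hcont hconthead
      have hchainP : List.Chain' (R2 G)
          (p.2 ++ ((zigA rest ++ (zigB rest).reverse) ++ (p.1 :: l'))) := by
        refine List.IsChain.append ?_ hch ?_
        · exact chain'_of_forall_nbr (fun x hx => Or.inr (hleafp x hx))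
        · intro x hx y hy
          exact rnn (Or.inr (hleafp x (List.mem_of_mem_getLast? hx))) (hhd y hy)
      refine ⟨by rw [hkey]; exact hchainP, ?_⟩
      intro y hy
      rw [hkey] at hy
      rcases mem_head?_append hy with hy | hy
      · exact rnn (Or.inr hsp.symm) (Or.inr (hleafp y (List.mem_of_mem_head? hy)))
      · exact rnn (Or.inr hsp.symm) (hhd y hy)

lemma zig_spec {s : V} {arm : List (V × List V)}
    (hchain : List.Chain G.Adj s (arm.map Prod.fst))
    (hleaf : ∀ p ∈ arm, ∀ x ∈ p.2, G.Adj p.1 x) :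
    List.Chain' (R2 G) (zig arm) ∧ (∀ x ∈ (zig arm).getLast?, R2 G x s) ∧
      (∀ y ∈ (zig arm).head?, Nbr G s y) := by
  have hz := (zigAB_chain arm s hchain hleaf).1
  have h1 := hz [s] (List.isChain_singleton s) (by simp)
  have h0 := hz [] List.isChain_nil (by simp)
  rw [List.append_nil] at h0
  obtain ⟨hc1, -, hjun⟩ := List.isChain_append.mp h1.1
  exact ⟨hc1, fun x hx => hjun x hx s (by simp), h0.2⟩

lemma exists_walk_of_chain : ∀ (l : List V) (x y : V), List.Chain G.Adj x l →
    (x :: l).getLast? = some y → ∃ w : G.Walk x y, w.support = x :: l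
  | [], x, y, _, hy => by
    simp only [List.getLast?_singleton, Option.some_inj] at hy
    subst hy
    exact ⟨SimpleGraph.Walk.nil, by simp⟩
  | b :: l, x, y, h, hy => by
    rw [List.Chain, List.isChain_cons_cons] at h
    rw [List.getLast?_cons_cons] at hy
    obtain ⟨w, hw⟩ := exists_walk_of_chain l b y h.2 hy
    exact ⟨SimpleGraph.Walk.cons h.1 w, by simp [hw]⟩

lemma short_walk_edge_endpoints {x y u v : V} (w : G.Walk x y) (hw : w.length ≤ 2)
    (he : s(u, v) ∈ w.edges) : u = x ∨ u = y ∨ v = x ∨ v = y := by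
  cases w with
  | nil => simp at he
  | @cons _ m _ h p =>
    cases p with
    | nil =>
      simp only [SimpleGraph.Walk.edges_cons, SimpleGraph.Walk.edges_nil,
        List.mem_singleton] at he
      have := Sym2.eq_iff.mp he
      tauto
    | @cons _ m' _ h' q =>
      cases q with
      | nil =>
        simp only [SimpleGraph.Walk.edges_cons, SimpleGraph.Walk.edges_nil, List.mem_cons,
          List.mem_singleton, List.not_mem_nil, or_false] at he
        rcases he with he | he <;> have := Sym2.eq_iff.mp he
        all_goals tauto
      | cons h'' q' => simp only [SimpleGraph.Walk.length_cons] at hw; omega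

/-- In an acyclic graph on `Fin n` in which any two consecutively labeled
vertices are joined by a walk of length at most `2`, every admissible path has
at most `3` vertices. -/
lemma admissible_length_le_three {n : ℕ} {G : SimpleGraph (Fin n)}
    (hac : G.IsAcyclic)
    (hstep : ∀ i j : Fin n, (j : ℕ) = (i : ℕ) + 1 → R2 G i j) :
    ∀ l : List (Fin n), IsAdmissible G l → l.length ≤ 3 := by
  intro l hl
  by_contra hlen
  push_neg at hlen
  obtain ⟨i, j, hij, hhead, hlast, ⟨hchain, hnodup⟩, hint, -⟩ := hl
  rcases l with - | ⟨a, l⟩; · simp at hlen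
  rcases l with - | ⟨b, l⟩; · simp at hlen
  rcases l with - | ⟨c, l⟩; · simp at hlen
  rcases l with - | ⟨d, l4⟩; · simp at hlen
  obtain rfl : a = i := by simpa using hhead
  have hlast' : (c :: d :: l4).getLast? = some j := by
    rw [List.getLast?_cons_cons, List.getLast?_cons_cons] at hlast
    exact hlast
  have hdl : (a :: b :: c :: d :: l4).tail.dropLast = b :: c :: (d :: l4).dropLast := by
    simp [List.dropLast]
  have hb : b < a ∨ j < b := hint b (by rw [hdl]; simp)
  have hc : c < a ∨ j < c := hint c (by rw [hdl]; simp)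
  rw [List.Chain', List.isChain_cons_cons] at hchain
  obtain ⟨hab, hchain⟩ := hchain
  rw [List.isChain_cons_cons] at hchain
  obtain ⟨hbc, hchain⟩ := hchain
  simp only [List.nodup_cons, List.mem_cons] at hnodup
  have hbnotin : b ∉ (c :: d :: l4) := by
    intro hmem
    exact hnodup.2.1 (by simpa using hmem)
  have hac' : a ≠ c := fun h => (hnodup.1 (Or.inr (Or.inl h))).elim
  have hbc' : b ≠ c := fun h => (hnodup.2.1 (Or.inl h)).elim
  simp only [Fin.lt_def] at hb hc hij
  have hchainc : List.Chain G.Adj c (d :: l4) := hchain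
  obtain ⟨w1, hw1⟩ := exists_walk_of_chain (d :: l4) c j hchainc hlast'
  have key : ∀ m : ℕ, (a : ℕ) ≤ m → ∀ hm : m < n, m ≤ (j : ℕ) →
      ∃ w : G.Walk a ⟨m, hm⟩, s(b, c) ∉ w.edges := by
    intro m ham
    induction m, ham using Nat.le_induction with
    | base =>
      intro hm hj
      have : (⟨(a : ℕ), hm⟩ : Fin n) = a := by ext; rfl
      rw [this]
      exact ⟨SimpleGraph.Walk.nil, by simp⟩
    | succ m ham IH =>
      intro hm1 hj1
      have hm : m < n := by omega
      obtain ⟨w, hwavoid⟩ := IH hm (by omega)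
      obtain ⟨ws, hws⟩ := hstep ⟨m, hm⟩ ⟨m + 1, hm1⟩ (by simp)
      have hwsavoid : s(b, c) ∉ ws.edges := by
        intro he
        have hval : (b : ℕ) = m ∨ (b : ℕ) = m + 1 ∨ (c : ℕ) = m ∨ (c : ℕ) = m + 1 := by
          rcases short_walk_edge_endpoints ws hws he with h | h | h | h
          · exact Or.inl (congrArg Fin.val h)
          · exact Or.inr (Or.inl (congrArg Fin.val h))
          · exact Or.inr (Or.inr (Or.inl (congrArg Fin.val h)))
          · exact Or.inr (Or.inr (Or.inr (congrArg Fin.val h)))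
        omega
      refine ⟨w.append ws, ?_⟩
      rw [SimpleGraph.Walk.edges_append, List.mem_append]
      tauto
  have haj : (a : ℕ) ≤ (j : ℕ) := le_of_lt hij
  obtain ⟨W0, hW0⟩ := key (j : ℕ) haj j.isLt le_rfl
  have hjeq : (⟨(j : ℕ), j.isLt⟩ : Fin n) = j := by ext; rfl
  obtain ⟨W, hWavoid⟩ : ∃ w : G.Walk a j, s(b, c) ∉ w.edges :=
    ⟨W0.copy rfl hjeq, by simpa using hW0⟩
  have hw1avoid : s(b, c) ∉ w1.edges := by
    intro he
    exact hbnotin (hw1 ▸ w1.fst_mem_support_of_mem_edges he)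
  have wt : ∃ w : G.Walk b c, s(b, c) ∉ w.edges := by
    refine ⟨SimpleGraph.Walk.cons hab.symm (W.append w1.reverse), ?_⟩
    simp only [SimpleGraph.Walk.edges_cons, SimpleGraph.Walk.edges_append,
      SimpleGraph.Walk.edges_reverse, List.mem_cons, List.mem_append, List.mem_reverse]
    push_neg
    refine ⟨?_, hWavoid, hw1avoid⟩
    intro h
    rcases Sym2.eq_iff.mp h with ⟨-, h2⟩ | ⟨-, h2⟩
    · exact hac' h2.symm
    · exact hbc' h2.symm
  obtain ⟨w, hwavoid⟩ := wt
  have hreach : (G \ fromEdgeSet {s(b, c)}).Reachable b c :=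
    reachable_delete_edges_iff_exists_walk.mpr ⟨w, hwavoid⟩
  exact (isBridge_iff.mp (isAcyclic_iff_forall_adj_isBridge.mp hac hbc)) hreach

/-- A graph obtained by joining two acyclic graphs on disjoint vertex sets by a
single bridge is acyclic. -/
lemma glued_isAcyclic {V₁ V₂ : Type*} (T₁ : SimpleGraph V₁) (T₂ : SimpleGraph V₂)
    (h₁ : T₁.IsAcyclic) (h₂ : T₂.IsAcyclic) (v₁ : V₁) (v₂ : V₂)
    (T : SimpleGraph (V₁ ⊕ V₂))
    (hT : T = T₁.map Function.Embedding.inl ⊔ T₂.map Function.Embedding.inr ⊔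
      SimpleGraph.fromEdgeSet {s(Sum.inl v₁, Sum.inr v₂)}) : T.IsAcyclic := by
  classical
  have hadj_cases : ∀ {x z : V₁ ⊕ V₂}, T.Adj x z →
      (∃ a a', x = inl a ∧ z = inl a' ∧ T₁.Adj a a') ∨
      (∃ b b', x = inr b ∧ z = inr b' ∧ T₂.Adj b b') ∨
      (x = inl v₁ ∧ z = inr v₂) ∨ (x = inr v₂ ∧ z = inl v₁) := by
    intro x z h
    rw [hT] at h
    rcases h with (h | h) | h
    · obtain ⟨-, a, a', ha, rfl, rfl⟩ := h
      exact Or.inl ⟨a, a', rfl, rfl, ha⟩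
    · obtain ⟨-, b, b', hb, rfl, rfl⟩ := h
      exact Or.inr (Or.inl ⟨b, b', rfl, rfl, hb⟩)
    · obtain ⟨hmem, -⟩ := h
      rcases Sym2.eq_iff.mp hmem with ⟨rfl, rfl⟩ | ⟨rfl, rfl⟩
      · exact Or.inr (Or.inr (Or.inl ⟨rfl, rfl⟩))
      · exact Or.inr (Or.inr (Or.inr ⟨rfl, rfl⟩))
  have cross : ∀ {x y : V₁ ⊕ V₂} (p : T.Walk x y) (a : V₁) (b : V₂),
      x = inl a → y = inr b → s(inl v₁, inr v₂) ∈ p.edges := by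
    intro x y p
    induction p with
    | nil => rintro a b rfl h; exact absurd h (by simp)
    | @cons x z y h q IH =>
      rintro a b rfl rfl
      rcases hadj_cases h with ⟨a', a'', ha', rfl, -⟩ | ⟨b', b'', hb', -, -⟩ |
          ⟨h1, h2⟩ | ⟨h1, h2⟩
      · rw [SimpleGraph.Walk.edges_cons, List.mem_cons]
        exact Or.inr (IH a'' b rfl rfl)
      · exact absurd hb' (by simp)
      · subst h2
        obtain rfl : v₁ = a := (inl.inj h1).symm
        rw [SimpleGraph.Walk.edges_cons, List.mem_cons]
        exact Or.inl rfl
      · exact absurd h1 (by simp)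
  have cross' : ∀ {x y : V₁ ⊕ V₂} (p : T.Walk x y) (a : V₂) (b : V₁),
      x = inr a → y = inl b → s(inl v₁, inr v₂) ∈ p.edges := by
    intro x y p a b hx hy
    have := cross p.reverse b a hy hx
    rwa [SimpleGraph.Walk.edges_reverse, List.mem_reverse] at this
  have project₁ : ∀ (k : ℕ) {x y : V₁ ⊕ V₂} (p : T.Walk x y), p.length ≤ k →
      ∀ (a b : V₁), x = inl a → y = inl b →
      ∃ q : T₁.Walk a b, ∀ e ∈ q.edges, Sym2.map inl e ∈ p.edges := by
    intro k
    induction k with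
    | zero =>
      intro x y p hp a b hx hy
      cases p with
      | nil =>
        obtain rfl : a = b := by rw [hx] at hy; exact inl.inj hy
        exact ⟨SimpleGraph.Walk.nil, by simp⟩
      | cons h q => simp [SimpleGraph.Walk.length_cons] at hp
    | succ k IH =>
      intro x y p hp a b hx hy
      cases p with
      | nil =>
        obtain rfl : a = b := by rw [hx] at hy; exact inl.inj hy
        exact ⟨SimpleGraph.Walk.nil, by simp⟩
      | @cons x z y h q =>
        subst hx hy
        have hqlen : q.length ≤ k := by
          rw [SimpleGraph.Walk.length_cons] at hp; omega
        rcases hadj_cases h with ⟨a', a'', ha', rfl, hadj'⟩ | ⟨b', b'', hb', -, -⟩ |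
            ⟨h1, h2⟩ | ⟨h1, h2⟩
        · obtain rfl : a = a' := inl.inj ha'
          obtain ⟨q', hq'⟩ := IH q hqlen a'' b rfl rfl
          refine ⟨SimpleGraph.Walk.cons hadj' q', ?_⟩
          intro e he
          rw [SimpleGraph.Walk.edges_cons, List.mem_cons] at he ⊢
          rcases he with rfl | he
          · exact Or.inl rfl
          · exact Or.inr (hq' e he)
        · exact absurd hb' (by simp)
        · subst h2
          obtain rfl : v₁ = a := (inl.inj h1).symm
          have hmem : inl v₁ ∈ q.support :=
            q.fst_mem_support_of_mem_edges (cross' q v₂ b rfl rfl)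
          have hq2len : (q.dropUntil _ hmem).length ≤ k :=
            le_trans (SimpleGraph.Walk.length_dropUntil_le q hmem) hqlen
          obtain ⟨q', hq'⟩ := IH (q.dropUntil _ hmem) hq2len v₁ b rfl rfl
          refine ⟨q', ?_⟩
          intro e he
          rw [SimpleGraph.Walk.edges_cons, List.mem_cons]
          exact Or.inr (SimpleGraph.Walk.edges_dropUntil_subset q hmem (hq' e he))
        · exact absurd h1 (by simp)
  have project₂ : ∀ (k : ℕ) {x y : V₁ ⊕ V₂} (p : T.Walk x y), p.length ≤ k →
      ∀ (a b : V₂), x = inr a → y = inr b →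
      ∃ q : T₂.Walk a b, ∀ e ∈ q.edges, Sym2.map inr e ∈ p.edges := by
    intro k
    induction k with
    | zero =>
      intro x y p hp a b hx hy
      cases p with
      | nil =>
        obtain rfl : a = b := by rw [hx] at hy; exact inr.inj hy
        exact ⟨SimpleGraph.Walk.nil, by simp⟩
      | cons h q => simp [SimpleGraph.Walk.length_cons] at hp
    | succ k IH =>
      intro x y p hp a b hx hy
      cases p with
      | nil =>
        obtain rfl : a = b := by rw [hx] at hy; exact inr.inj hy
        exact ⟨SimpleGraph.Walk.nil, by simp⟩
      | @cons x z y h q =>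
        subst hx hy
        have hqlen : q.length ≤ k := by
          rw [SimpleGraph.Walk.length_cons] at hp; omega
        rcases hadj_cases h with ⟨a', a'', ha', -, -⟩ | ⟨b', b'', hb', rfl, hadj'⟩ |
            ⟨h1, h2⟩ | ⟨h1, h2⟩
        · exact absurd ha' (by simp)
        · obtain rfl : a = b' := inr.inj hb'
          obtain ⟨q', hq'⟩ := IH q hqlen b'' b rfl rfl
          refine ⟨SimpleGraph.Walk.cons hadj' q', ?_⟩
          intro e he
          rw [SimpleGraph.Walk.edges_cons, List.mem_cons] at he ⊢
          rcases he with rfl | he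
          · exact Or.inl rfl
          · exact Or.inr (hq' e he)
        · exact absurd h1 (by simp)
        · subst h2
          obtain rfl : v₂ = a := (inr.inj h1).symm
          have hmem : inr v₂ ∈ q.support :=
            q.snd_mem_support_of_mem_edges (cross q v₁ b rfl rfl)
          have hq2len : (q.dropUntil _ hmem).length ≤ k :=
            le_trans (SimpleGraph.Walk.length_dropUntil_le q hmem) hqlen
          obtain ⟨q', hq'⟩ := IH (q.dropUntil _ hmem) hq2len v₂ b rfl rfl
          refine ⟨q', ?_⟩
          intro e he
          rw [SimpleGraph.Walk.edges_cons, List.mem_cons]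
          exact Or.inr (SimpleGraph.Walk.edges_dropUntil_subset q hmem (hq' e he))
  rw [isAcyclic_iff_forall_adj_isBridge]
  intro x y hxy
  rw [isBridge_iff]
  rw [reachable_delete_edges_iff_exists_walk]
  rintro ⟨p, hp⟩
  rcases hadj_cases hxy with ⟨a, b, rfl, rfl, hadj'⟩ | ⟨a, b, rfl, rfl, hadj'⟩ |
      ⟨rfl, rfl⟩ | ⟨rfl, rfl⟩
  · obtain ⟨q, hq⟩ := project₁ p.length p le_rfl a b rfl rfl
    have havoid : s(a, b) ∉ q.edges := by
      intro he
      exact hp (by simpa using hq _ he)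
    have hbr := (isBridge_iff.mp (isAcyclic_iff_forall_adj_isBridge.mp h₁ hadj'))
    exact hbr (reachable_delete_edges_iff_exists_walk.mpr ⟨q, havoid⟩)
  · obtain ⟨q, hq⟩ := project₂ p.length p le_rfl a b rfl rfl
    have havoid : s(a, b) ∉ q.edges := by
      intro he
      exact hp (by simpa using hq _ he)
    have hbr := (isBridge_iff.mp (isAcyclic_iff_forall_adj_isBridge.mp h₂ hadj'))
    exact hbr (reachable_delete_edges_iff_exists_walk.mpr ⟨q, havoid⟩)
  · exact hp (cross p v₁ v₂ rfl rfl)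
  · have hmem := cross' p v₂ v₁ rfl rfl
    refine hp ?_
    rwa [show s(inr v₂, inl v₁) = s(inl v₁, inr v₂) from Sym2.eq_swap]

end BrCat

open BrCat

/-- If `T` is obtained from two vertex-disjoint caterpillar trees `T₁`, `T₂`
by adding a bridge joining a vertex `v₁` of the central path of `T₁` to a
vertex `v₂` of the central path of `T₂`, then `T` admits a labeling by
`{1,…,n}` with `d(i, i+1) ≤ 2` for all `1 ≤ i < n`; hence every admissible
path of `T` with respect to this labeling has at most 3 vertices. -/
theorem bridge_of_caterpillars_labeling {V₁ V₂ : Type*} [Fintype V₁] [Fintype V₂]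
    {n : ℕ} (T₁ : SimpleGraph V₁) (T₂ : SimpleGraph V₂)
    (hT₁ : T₁.IsTree) (hT₂ : T₂.IsTree)
    (u₁ w₁ : V₁) (p₁ : T₁.Walk u₁ w₁) (hp₁ : p₁.IsPath)
    (hcover₁ : ∀ x : V₁, x ∈ p₁.support ∨ ∃ y ∈ p₁.support, T₁.Adj x y)
    (u₂ w₂ : V₂) (p₂ : T₂.Walk u₂ w₂) (hp₂ : p₂.IsPath)
    (hcover₂ : ∀ x : V₂, x ∈ p₂.support ∨ ∃ y ∈ p₂.support, T₂.Adj x y)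
    (v₁ : V₁) (hv₁ : v₁ ∈ p₁.support) (v₂ : V₂) (hv₂ : v₂ ∈ p₂.support)
    (T : SimpleGraph (V₁ ⊕ V₂))
    (hT : T = T₁.map Function.Embedding.inl ⊔ T₂.map Function.Embedding.inr ⊔
      SimpleGraph.fromEdgeSet {s(Sum.inl v₁, Sum.inr v₂)})
    (hcard : Fintype.card V₁ + Fintype.card V₂ = n) :
    ∃ e : (V₁ ⊕ V₂) ≃ Fin n,
      (∀ i j : Fin n, (j : ℕ) = (i : ℕ) + 1 → (T.map e.toEmbedding).dist i j ≤ 2) ∧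
      (∀ l : List (Fin n), IsAdmissible (T.map e.toEmbedding) l → l.length ≤ 3) := by
  classical
  -- basic adjacency facts in `T`
  have hadj1 : ∀ {a b : V₁}, T₁.Adj a b → T.Adj (inl a) (inl b) := by
    intro a b h
    rw [hT]
    exact Or.inl (Or.inl ⟨fun e => h.ne (inl_injective e), a, b, h, rfl, rfl⟩)
  have hadj2 : ∀ {a b : V₂}, T₂.Adj a b → T.Adj (inr a) (inr b) := by
    intro a b h
    rw [hT]
    exact Or.inl (Or.inr ⟨fun e => h.ne (inr_injective e), a, b, h, rfl, rfl⟩)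
  have hbr : T.Adj (inl v₁) (inr v₂) := by
    rw [hT]
    exact Or.inr ⟨rfl, by simp⟩
  -- split the spines at the attachment vertices
  obtain ⟨E₁, D₁, hsp₁⟩ := List.append_of_mem hv₁
  obtain ⟨E₂, D₂, hsp₂⟩ := List.append_of_mem hv₂
  -- choose a spine neighbor for every non-spine vertex
  have hcov₁ : ∀ x : V₁, ∃ y, x ∉ p₁.support → (y ∈ p₁.support ∧ T₁.Adj y x) := by
    intro x
    by_cases hx : x ∈ p₁.support
    · exact ⟨v₁, fun h => absurd hx h⟩
    · rcases hcover₁ x with h | ⟨y, hy, hadj⟩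
      · exact absurd h hx
      · exact ⟨y, fun _ => ⟨hy, hadj.symm⟩⟩
  choose nb₁ hnb₁ using hcov₁
  have hcov₂ : ∀ x : V₂, ∃ y, x ∉ p₂.support → (y ∈ p₂.support ∧ T₂.Adj y x) := by
    intro x
    by_cases hx : x ∈ p₂.support
    · exact ⟨v₂, fun h => absurd hx h⟩
    · rcases hcover₂ x with h | ⟨y, hy, hadj⟩
      · exact absurd h hx
      · exact ⟨y, fun _ => ⟨hy, hadj.symm⟩⟩
  choose nb₂ hnb₂ using hcov₂
  -- the leaf lists
  obtain ⟨lv₁, hlv₁mem, hlv₁nodup⟩ :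
      ∃ lv : V₁ → List V₁, (∀ t x, x ∈ lv t ↔ (x ∉ p₁.support ∧ nb₁ x = t)) ∧
        ∀ t, (lv t).Nodup :=
    ⟨fun t => (Finset.univ.filter (fun x => x ∉ p₁.support ∧ nb₁ x = t)).toList,
      by intro t x; simp, fun t => Finset.nodup_toList _⟩
  obtain ⟨lv₂, hlv₂mem, hlv₂nodup⟩ :
      ∃ lv : V₂ → List V₂, (∀ t x, x ∈ lv t ↔ (x ∉ p₂.support ∧ nb₂ x = t)) ∧
        ∀ t, (lv t).Nodup :=
    ⟨fun t => (Finset.univ.filter (fun x => x ∉ p₂.support ∧ nb₂ x = t)).toList,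
      by intro t x; simp, fun t => Finset.nodup_toList _⟩
  -- the arms and leaf blocks, inside `V₁ ⊕ V₂`
  set armA₁ : List ((V₁ ⊕ V₂) × List (V₁ ⊕ V₂)) :=
    E₁.reverse.map (fun t => (inl t, (lv₁ t).map inl)) with harmA₁
  set armB₁ : List ((V₁ ⊕ V₂) × List (V₁ ⊕ V₂)) :=
    D₁.map (fun t => (inl t, (lv₁ t).map inl)) with harmB₁
  set armD₂ : List ((V₁ ⊕ V₂) × List (V₁ ⊕ V₂)) :=
    E₂.reverse.map (fun t => (inr t, (lv₂ t).map inr)) with harmD₂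
  set armC₂ : List ((V₁ ⊕ V₂) × List (V₁ ⊕ V₂)) :=
    D₂.map (fun t => (inr t, (lv₂ t).map inr)) with harmC₂
  set F1 : List (V₁ ⊕ V₂) := (lv₁ v₁).map inl with hF1
  set F2 : List (V₁ ⊕ V₂) := (lv₂ v₂).map inr with hF2
  set L : List (V₁ ⊕ V₂) :=
    zig armA₁ ++ ((inl v₁ :: ((zig armB₁).reverse ++ F1)) ++
      (inr v₂ :: ((zig armD₂).reverse ++ (F2 ++ zig armC₂)))) with hL
  -- spine chains
  have hchsup₁ : List.Chain' T₁.Adj p₁.support := p₁.isChain_adj_support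
  rw [hsp₁] at hchsup₁
  obtain ⟨hchE₁, hchD₁⟩ := List.isChain_split.mp hchsup₁
  have hchsup₂ : List.Chain' T₂.Adj p₂.support := p₂.isChain_adj_support
  rw [hsp₂] at hchsup₂
  obtain ⟨hchE₂, hchD₂⟩ := List.isChain_split.mp hchsup₂
  have hchE₁' : List.Chain T₁.Adj v₁ E₁.reverse := by
    have h := List.isChain_reverse.mpr (hchE₁.imp fun _ _ h => h.symm)
    rw [List.reverse_append, List.reverse_singleton, List.singleton_append] at h
    exact h
  have hchE₂' : List.Chain T₂.Adj v₂ E₂.reverse := by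
    have h := List.isChain_reverse.mpr (hchE₂.imp fun _ _ h => h.symm)
    rw [List.reverse_append, List.reverse_singleton, List.singleton_append] at h
    exact h
  have hchD₁' : List.Chain T₁.Adj v₁ D₁ := hchD₁
  have hchD₂' : List.Chain T₂.Adj v₂ D₂ := hchD₂
  -- arm hypotheses
  have hchA₁ : List.Chain T.Adj (inl v₁) (armA₁.map Prod.fst) := by
    have heq : armA₁.map Prod.fst = E₁.reverse.map inl := by
      rw [harmA₁, List.map_map]; rfl
    rw [heq]
    exact List.isChain_map_of_isChain (l := v₁ :: E₁.reverse) inl (fun a b h => hadj1 h) hchE₁'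
  have hchB₁ : List.Chain T.Adj (inl v₁) (armB₁.map Prod.fst) := by
    have heq : armB₁.map Prod.fst = D₁.map inl := by
      rw [harmB₁, List.map_map]; rfl
    rw [heq]
    exact List.isChain_map_of_isChain (l := v₁ :: D₁) inl (fun a b h => hadj1 h) hchD₁'
  have hchD₂'' : List.Chain T.Adj (inr v₂) (armD₂.map Prod.fst) := by
    have heq : armD₂.map Prod.fst = E₂.reverse.map inr := by
      rw [harmD₂, List.map_map]; rfl
    rw [heq]
    exact List.isChain_map_of_isChain (l := v₂ :: E₂.reverse) inr (fun a b h => hadj2 h) hchE₂'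
  have hchC₂ : List.Chain T.Adj (inr v₂) (armC₂.map Prod.fst) := by
    have heq : armC₂.map Prod.fst = D₂.map inr := by
      rw [harmC₂, List.map_map]; rfl
    rw [heq]
    exact List.isChain_map_of_isChain (l := v₂ :: D₂) inr (fun a b h => hadj2 h) hchD₂'
  have hlv₁adj : ∀ t u, u ∈ lv₁ t → T₁.Adj t u := by
    intro t u hu
    rw [hlv₁mem] at hu
    have := (hnb₁ u hu.1).2
    rwa [hu.2] at this
  have hlv₂adj : ∀ t u, u ∈ lv₂ t → T₂.Adj t u := by
    intro t u hu
    rw [hlv₂mem] at hu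
    have := (hnb₂ u hu.1).2
    rwa [hu.2] at this
  have hlfA₁ : ∀ p ∈ armA₁, ∀ x ∈ p.2, T.Adj p.1 x := by
    rw [harmA₁]
    intro p hp x hx
    obtain ⟨t, -, rfl⟩ := List.mem_map.mp hp
    obtain ⟨u, hu, rfl⟩ := List.mem_map.mp hx
    exact hadj1 (hlv₁adj t u hu)
  have hlfB₁ : ∀ p ∈ armB₁, ∀ x ∈ p.2, T.Adj p.1 x := by
    rw [harmB₁]
    intro p hp x hx
    obtain ⟨t, -, rfl⟩ := List.mem_map.mp hp
    obtain ⟨u, hu, rfl⟩ := List.mem_map.mp hx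
    exact hadj1 (hlv₁adj t u hu)
  have hlfD₂ : ∀ p ∈ armD₂, ∀ x ∈ p.2, T.Adj p.1 x := by
    rw [harmD₂]
    intro p hp x hx
    obtain ⟨t, -, rfl⟩ := List.mem_map.mp hp
    obtain ⟨u, hu, rfl⟩ := List.mem_map.mp hx
    exact hadj2 (hlv₂adj t u hu)
  have hlfC₂ : ∀ p ∈ armC₂, ∀ x ∈ p.2, T.Adj p.1 x := by
    rw [harmC₂]
    intro p hp x hx
    obtain ⟨t, -, rfl⟩ := List.mem_map.mp hp
    obtain ⟨u, hu, rfl⟩ := List.mem_map.mp hx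
    exact hadj2 (hlv₂adj t u hu)
  have hF1adj : ∀ x ∈ F1, T.Adj (inl v₁) x := by
    rw [hF1]
    intro x hx
    obtain ⟨u, hu, rfl⟩ := List.mem_map.mp hx
    exact hadj1 (hlv₁adj v₁ u hu)
  have hF2adj : ∀ x ∈ F2, T.Adj (inr v₂) x := by
    rw [hF2]
    intro x hx
    obtain ⟨u, hu, rfl⟩ := List.mem_map.mp hx
    exact hadj2 (hlv₂adj v₂ u hu)
  -- the chain of short walks along `L`
  obtain ⟨hAc, hAl, hAh⟩ := zig_spec hchA₁ hlfA₁
  obtain ⟨hBc, hBl, hBh⟩ := zig_spec hchB₁ hlfB₁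
  obtain ⟨hDc, hDl, hDh⟩ := zig_spec hchD₂'' hlfD₂
  obtain ⟨hCc, hCl, hCh⟩ := zig_spec hchC₂ hlfC₂
  have hF1n : ∀ x ∈ F1, Nbr T (inl v₁) x := fun x hx => Or.inr (hF1adj x hx)
  have hF2n : ∀ x ∈ F2, Nbr T (inr v₂) x := fun x hx => Or.inr (hF2adj x hx)
  have hchainL : List.Chain' (R2 T) L := by
    have hrevB : List.Chain' (R2 T) (zig armB₁).reverse :=
      List.isChain_reverse.mpr (List.IsChain.imp (fun _ _ h => h.symm) hBc)
    have hM1tail : List.Chain' (R2 T) ((zig armB₁).reverse ++ F1) := by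
      refine List.IsChain.append hrevB (chain'_of_forall_nbr hF1n) ?_
      intro x hx y hy
      rw [List.getLast?_reverse] at hx
      exact rnn (hBh x hx) (hF1n y (List.mem_of_mem_head? hy))
    have hM1 : List.Chain' (R2 T) (inl v₁ :: ((zig armB₁).reverse ++ F1)) := by
      rw [List.Chain', List.isChain_cons]
      refine ⟨?_, hM1tail⟩
      intro y hy
      rcases mem_head?_append hy with hy | hy
      · rw [List.head?_reverse] at hy
        exact (hBl y hy).symm
      · exact rnn (Nbr.self _) (hF1n y (List.mem_of_mem_head? hy))
    have hM2tail2 : List.Chain' (R2 T) (F2 ++ zig armC₂) := by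
      refine List.IsChain.append (chain'_of_forall_nbr hF2n) hCc ?_
      intro x hx y hy
      exact rnn (hF2n x (List.mem_of_mem_getLast? hx)) (hCh y hy)
    have hM2tail : List.Chain' (R2 T) ((zig armD₂).reverse ++ (F2 ++ zig armC₂)) := by
      refine List.IsChain.append (List.isChain_reverse.mpr (List.IsChain.imp (fun _ _ h => h.symm) hDc))
        hM2tail2 ?_
      intro x hx y hy
      rw [List.getLast?_reverse] at hx
      rcases mem_head?_append hy with hy | hy
      · exact rnn (hDh x hx) (hF2n y (List.mem_of_mem_head? hy))
      · exact rnn (hDh x hx) (hCh y hy)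
    have hM2 : List.Chain' (R2 T)
        (inr v₂ :: ((zig armD₂).reverse ++ (F2 ++ zig armC₂))) := by
      rw [List.Chain', List.isChain_cons]
      refine ⟨?_, hM2tail⟩
      intro y hy
      rcases mem_head?_append hy with hy | hy
      · rw [List.head?_reverse] at hy
        exact (hDl y hy).symm
      · rcases mem_head?_append hy with hy | hy
        · exact rnn (Nbr.self _) (hF2n y (List.mem_of_mem_head? hy))
        · exact rnn (Nbr.self _) (hCh y hy)
    rw [hL]
    refine List.IsChain.append hAc (List.IsChain.append hM1 hM2 ?_) ?_
    · -- junction between the two halves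
      intro x hx y hy
      simp only [List.head?_cons, Option.mem_some_iff] at hy
      subst hy
      rcases mem_getLast?_cons' hx with hx | rfl
      · rcases mem_getLast?_append hx with hx | hx
        · exact r2_of_nbr_adj (Or.inr (hF1adj x (List.mem_of_mem_getLast? hx))) hbr
        · rw [List.getLast?_reverse] at hx
          exact r2_of_nbr_adj (hBh x hx) hbr
      · exact R2.of_adj hbr
    · -- junction after the first arm
      intro x hx y hy
      rw [List.cons_append, List.head?_cons] at hy
      simp only [Option.mem_some_iff] at hy
      subst hy
      exact hAl x hx
  -- permutation bookkeeping
  set gg₁ : V₁ → List (V₁ ⊕ V₂) := fun t => (t :: lv₁ t).map inl with hgg₁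
  set gg₂ : V₂ → List (V₁ ⊕ V₂) := fun t => (t :: lv₂ t).map inr with hgg₂
  have hpermA : (zig armA₁).Perm (E₁.flatMap gg₁) := by
    refine (zig_perm _).trans ?_
    have heq : armA₁.flatMap (fun p => p.1 :: p.2) = E₁.reverse.flatMap gg₁ := by
      rw [harmA₁, List.flatMap_map]; rfl
    rw [heq]
    exact (List.reverse_perm E₁).flatMap_right _
  have hpermB : ((zig armB₁).reverse).Perm (D₁.flatMap gg₁) := by
    refine (List.reverse_perm _).trans ((zig_perm _).trans ?_)
    rw [harmB₁, List.flatMap_map]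
    rfl
  have hpermD : ((zig armD₂).reverse).Perm (E₂.flatMap gg₂) := by
    calc (zig armD₂).reverse
        ~ zig armD₂ := List.reverse_perm _
      _ ~ armD₂.flatMap (fun p => p.1 :: p.2) := zig_perm _
      _ = E₂.reverse.flatMap gg₂ := by rw [harmD₂, List.flatMap_map]; rfl
      _ ~ E₂.flatMap gg₂ := (List.reverse_perm E₂).flatMap_right _
  have hpermC : (zig armC₂).Perm (D₂.flatMap gg₂) := by
    calc zig armC₂
        ~ armC₂.flatMap (fun p => p.1 :: p.2) := zig_perm _
      _ = D₂.flatMap gg₂ := by rw [harmC₂, List.flatMap_map]; rfl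
  have hblock1 : (zig armA₁ ++ (inl v₁ :: ((zig armB₁).reverse ++ F1))).Perm
      (p₁.support.flatMap gg₁) := by
    calc zig armA₁ ++ (inl v₁ :: ((zig armB₁).reverse ++ F1))
        ~ E₁.flatMap gg₁ ++ (inl v₁ :: (D₁.flatMap gg₁ ++ F1)) :=
          List.Perm.append hpermA (List.Perm.cons _ (List.Perm.append hpermB (List.Perm.refl _)))
      _ ~ E₁.flatMap gg₁ ++ (inl v₁ :: (F1 ++ D₁.flatMap gg₁)) :=
          List.Perm.append_left _ (List.Perm.cons _ List.perm_append_comm)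
      _ = E₁.flatMap gg₁ ++ (gg₁ v₁ ++ D₁.flatMap gg₁) := by
          rw [hgg₁, hF1]; simp
      _ = (E₁ ++ v₁ :: D₁).flatMap gg₁ := by
          rw [List.flatMap_append, List.flatMap_cons]
      _ = p₁.support.flatMap gg₁ := by rw [← hsp₁]
  have hblock2 : (inr v₂ :: ((zig armD₂).reverse ++ (F2 ++ zig armC₂))).Perm
      (p₂.support.flatMap gg₂) := by
    calc inr v₂ :: ((zig armD₂).reverse ++ (F2 ++ zig armC₂))
        ~ inr v₂ :: (E₂.flatMap gg₂ ++ (F2 ++ D₂.flatMap gg₂)) :=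
          List.Perm.cons _ (List.Perm.append hpermD (List.Perm.append_left _ hpermC))
      _ ~ E₂.flatMap gg₂ ++ (inr v₂ :: (F2 ++ D₂.flatMap gg₂)) := List.perm_middle.symm
      _ = E₂.flatMap gg₂ ++ (gg₂ v₂ ++ D₂.flatMap gg₂) := by
          rw [hgg₂, hF2]; simp
      _ = (E₂ ++ v₂ :: D₂).flatMap gg₂ := by
          rw [List.flatMap_append, List.flatMap_cons]
      _ = p₂.support.flatMap gg₂ := by rw [← hsp₂]
  have hpermL : L.Perm (p₁.support.flatMap gg₁ ++ p₂.support.flatMap gg₂) := by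
    rw [hL, ← List.append_assoc]
    exact List.Perm.append hblock1 hblock2
  -- nodup
  have hnd₁ : p₁.support.Nodup := hp₁.support_nodup
  have hnd₂ : p₂.support.Nodup := hp₂.support_nodup
  have hN₁nodup : (p₁.support.flatMap gg₁).Nodup := by
    rw [List.nodup_flatMap]
    constructor
    · intro t ht
      rw [hgg₁]
      refine (List.nodup_cons.mpr ⟨?_, hlv₁nodup t⟩).map inl_injective
      intro hmem
      exact ((hlv₁mem t t).mp hmem).1 ht
    · refine hnd₁.imp_of_mem ?_
      intro a b ha hb hne x hxa hxb
      rw [hgg₁] at hxa hxb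
      obtain ⟨xa, hxa', rfl⟩ := List.mem_map.mp hxa
      obtain ⟨xb, hxb', heq⟩ := List.mem_map.mp hxb
      rw [inl_injective heq] at hxb'
      rcases List.mem_cons.mp hxa' with h1 | h1 <;> rcases List.mem_cons.mp hxb' with h2 | h2
      · exact hne (h1.symm.trans h2)
      · exact ((hlv₁mem b xa).mp h2).1 (by rw [h1]; exact ha)
      · exact ((hlv₁mem a xa).mp h1).1 (by rw [h2]; exact hb)
      · exact hne (by rw [← ((hlv₁mem a xa).mp h1).2, ← ((hlv₁mem b xa).mp h2).2])
  have hN₂nodup : (p₂.support.flatMap gg₂).Nodup := by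
    rw [List.nodup_flatMap]
    constructor
    · intro t ht
      rw [hgg₂]
      refine (List.nodup_cons.mpr ⟨?_, hlv₂nodup t⟩).map inr_injective
      intro hmem
      exact ((hlv₂mem t t).mp hmem).1 ht
    · refine hnd₂.imp_of_mem ?_
      intro a b ha hb hne x hxa hxb
      rw [hgg₂] at hxa hxb
      obtain ⟨xa, hxa', rfl⟩ := List.mem_map.mp hxa
      obtain ⟨xb, hxb', heq⟩ := List.mem_map.mp hxb
      rw [inr_injective heq] at hxb'
      rcases List.mem_cons.mp hxa' with h1 | h1 <;> rcases List.mem_cons.mp hxb' with h2 | h2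
      · exact hne (h1.symm.trans h2)
      · exact ((hlv₂mem b xa).mp h2).1 (by rw [h1]; exact ha)
      · exact ((hlv₂mem a xa).mp h1).1 (by rw [h2]; exact hb)
      · exact hne (by rw [← ((hlv₂mem a xa).mp h1).2, ← ((hlv₂mem b xa).mp h2).2])
  have hside1inl : ∀ x ∈ p₁.support.flatMap gg₁, ∃ u, x = inl u := by
    intro x hx
    obtain ⟨t, -, hmem⟩ := List.mem_flatMap.mp hx
    rw [hgg₁] at hmem
    obtain ⟨u, -, rfl⟩ := List.mem_map.mp hmem
    exact ⟨u, rfl⟩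
  have hside2inr : ∀ x ∈ p₂.support.flatMap gg₂, ∃ u, x = inr u := by
    intro x hx
    obtain ⟨t, -, hmem⟩ := List.mem_flatMap.mp hx
    rw [hgg₂] at hmem
    obtain ⟨u, -, rfl⟩ := List.mem_map.mp hmem
    exact ⟨u, rfl⟩
  have hndM : (p₁.support.flatMap gg₁ ++ p₂.support.flatMap gg₂).Nodup := by
    refine List.Nodup.append hN₁nodup hN₂nodup ?_
    intro x hx1 hx2
    obtain ⟨u, rfl⟩ := hside1inl x hx1
    obtain ⟨u', h⟩ := hside2inr _ hx2
    exact absurd h (by simp)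
  have hndL : L.Nodup := (hpermL.nodup_iff).mpr hndM
  -- completeness
  have hmemM : ∀ x : V₁ ⊕ V₂, x ∈ p₁.support.flatMap gg₁ ++ p₂.support.flatMap gg₂ := by
    intro x
    rw [List.mem_append]
    cases x with
    | inl u =>
      refine Or.inl (List.mem_flatMap.mpr ?_)
      by_cases hu : u ∈ p₁.support
      · exact ⟨u, hu, by rw [hgg₁]; simp⟩
      · refine ⟨nb₁ u, (hnb₁ u hu).1, ?_⟩
        rw [hgg₁]
        simp only [List.mem_map, List.mem_cons]
        exact ⟨u, Or.inr ((hlv₁mem (nb₁ u) u).mpr ⟨hu, rfl⟩), rfl⟩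
    | inr u =>
      refine Or.inr (List.mem_flatMap.mpr ?_)
      by_cases hu : u ∈ p₂.support
      · exact ⟨u, hu, by rw [hgg₂]; simp⟩
      · refine ⟨nb₂ u, (hnb₂ u hu).1, ?_⟩
        rw [hgg₂]
        simp only [List.mem_map, List.mem_cons]
        exact ⟨u, Or.inr ((hlv₂mem (nb₂ u) u).mpr ⟨hu, rfl⟩), rfl⟩
  have hmemL : ∀ x : V₁ ⊕ V₂, x ∈ L := fun x => (hpermL.mem_iff).mpr (hmemM x)
  -- length
  have hlenL : L.length = n := by
    have h1 : L.toFinset = Finset.univ := Finset.eq_univ_of_forall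
      (fun x => List.mem_toFinset.mpr (hmemL x))
    have h2 := List.toFinset_card_of_nodup hndL
    rw [h1, Finset.card_univ, Fintype.card_sum, hcard] at h2
    exact h2.symm
  -- the labeling
  set e0 : Fin L.length ≃ (V₁ ⊕ V₂) := hndL.getEquivOfForallMemList L hmemL with he0
  set e : (V₁ ⊕ V₂) ≃ Fin n := e0.symm.trans (finCongr hlenL) with he
  have hgete : ∀ (j : Fin n) (hj : (j : ℕ) < L.length), e.symm j = L.get ⟨(j : ℕ), hj⟩ := by
    intro j hj
    rw [he, Equiv.symm_trans_apply, he0]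
    simp [List.Nodup.getEquivOfForallMemList]
  -- the homomorphism into the relabeled graph
  have hhomR2 : ∀ x y, R2 T x y → R2 (T.map e.toEmbedding) (e x) (e y) := by
    rintro x y ⟨w, hw⟩
    refine ⟨w.map ⟨e, fun h => ?_⟩, by simpa using hw⟩
    exact (SimpleGraph.map_adj _ _ _ _).mpr ⟨_, _, h, rfl, rfl⟩
  have hstepmap : ∀ i j : Fin n, (j : ℕ) = (i : ℕ) + 1 → R2 (T.map e.toEmbedding) i j := by
    intro i j hij
    have hj : (j : ℕ) < L.length := by rw [hlenL]; exact j.isLt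
    have hi : (i : ℕ) < L.length := by omega
    have hi1 : (i : ℕ) + 1 < L.length := by omega
    have hstepL : R2 T (L.get ⟨(i : ℕ), hi⟩) (L.get ⟨(i : ℕ) + 1, hi1⟩) :=
      List.isChain_iff_getElem.mp hchainL (i : ℕ) (by omega)
    have h2 := hhomR2 _ _ hstepL
    have hei : e (L.get ⟨(i : ℕ), hi⟩) = i := by
      rw [← hgete i hi]; simp
    have hej : e (L.get ⟨(i : ℕ) + 1, hi1⟩) = j := by
      have : L.get ⟨(i : ℕ) + 1, hi1⟩ = L.get ⟨(j : ℕ), hj⟩ := by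
        congr 1
        exact Fin.ext hij.symm
      rw [this, ← hgete j hj]; simp
    rwa [hei, hej] at h2
  -- acyclicity of the relabeled graph
  have hacyc : T.IsAcyclic :=
    glued_isAcyclic T₁ T₂ hT₁.IsAcyclic hT₂.IsAcyclic v₁ v₂ T hT
  have hacyc' : (T.map e.toEmbedding).IsAcyclic := by
    intro u c hc
    have hmapadj : ∀ a b, (T.map e.toEmbedding).Adj a b → T.Adj (e.symm a) (e.symm b) := by
      intro a b h
      obtain ⟨-, x, y, hxy, hx, hy⟩ := h
      have hx' : e.symm a = x := by
        rw [← hx]; simp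
      have hy' : e.symm b = y := by
        rw [← hy]; simp
      rwa [hx', hy']
    exact hacyc (c.map ⟨e.symm, fun {a b} h => hmapadj a b h⟩)
      ((SimpleGraph.Walk.map_isCycle_iff_of_injective
        (f := ⟨e.symm, fun {a b} h => hmapadj a b h⟩) (by exact e.symm.injective)).mpr hc)
  refine ⟨e, ?_, ?_⟩
  · intro i j hij
    obtain ⟨w, hw⟩ := hstepmap i j hij
    exact le_trans (SimpleGraph.dist_le w) hw
  · exact admissible_length_le_three hacyc' hstepmap
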